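/- Let Q̃ : E → ℝ be concave on all of E, and let Φ and Φ' be partitions of Ω such that Φ refines Φ'. Then the partition upper bound is monotone nonincreasing under refinement: L(Q̃;Φ) ≤ L(Q̃;Φ'). (Paper's Proposition 1, concave case, with the inequality in the mathematically correct direction.) -/

import Mathlib

open Finset

/-- A partition of a finite type `Ω`: a finite collection of nonempty,
pairwise disjoint subsets of `Ω` whose union is all of `Ω`. -/
def IsPartition {Ω : Type*} [Fintype Ω] (Φ : Finset (Finset Ω)) : Prop :=
  (∀ C ∈ Φ, C.Nonempty) ∧
    (∀ C ∈ Φ, ∀ D ∈ Φ, C ≠ D → Disjoint C D) ∧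
      ∀ ω : Ω, ∃ C ∈ Φ, ω ∈ C

/-- `Φ` refines `Φ'`: every cell of `Φ` is contained in some cell of `Φ'`. -/
def Refines {Ω : Type*} (Φ Φ' : Finset (Finset Ω)) : Prop :=
  ∀ C ∈ Φ, ∃ C' ∈ Φ', C ⊆ C'

/-- Partition bound `L(f;Φ) = ∑_{C∈Φ} P(C) · f(ξ̄(C))`, where `P(C) = ∑_{ω∈C} p ω`
and `ξ̄(C) = P(C)⁻¹ • ∑_{ω∈C} p ω • ξ ω`. -/
noncomputable def partBound {Ω : Type*} {E : Type*} [AddCommGroup E] [Module ℝ E]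
    (p : Ω → ℝ) (ξ : Ω → E) (f : E → ℝ) (Φ : Finset (Finset Ω)) : ℝ :=
  ∑ C ∈ Φ, (∑ ω ∈ C, p ω) * f ((∑ ω ∈ C, p ω)⁻¹ • ∑ ω ∈ C, p ω • ξ ω)

/-- Expectation `E[f∘ξ] = ∑_{ω∈Ω} p ω · f (ξ ω)`. -/
noncomputable def expVal {Ω : Type*} [Fintype Ω] {E : Type*}
    (p : Ω → ℝ) (ξ : Ω → E) (f : E → ℝ) : ℝ :=
  ∑ ω, p ω * f (ξ ω)

/-- Paper's Proposition 1 (concave case): if `Φ` refines `Φ'`, then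
`L(Q̃;Φ) ≤ L(Q̃;Φ')` for concave `Q̃`. -/
theorem partBound_antitone_of_refines_concave
    {Ω : Type*} [Fintype Ω] [Nonempty Ω]
    {E : Type*} [AddCommGroup E] [Module ℝ E]
    (p : Ω → ℝ) (hp_pos : ∀ ω, 0 < p ω) (hp_sum : ∑ ω, p ω = 1)
    (ξ : Ω → E) (Qt : E → ℝ) (hQt : ConcaveOn ℝ Set.univ Qt)
    (Φ Φ' : Finset (Finset Ω))
    (hΦ : IsPartition Φ) (hΦ' : IsPartition Φ')
    (href : Refines Φ Φ') :
    partBound p ξ Qt Φ ≤ partBound p ξ Qt Φ' := by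
  classical
  obtain ⟨hΦne, hΦdisj, hΦcov⟩ := hΦ
  obtain ⟨hΦ'ne, hΦ'disj, _⟩ := hΦ'
  have hPpos : ∀ C : Finset Ω, C.Nonempty → 0 < ∑ ω ∈ C, p ω := fun C hC =>
    Finset.sum_pos (fun ω _ => hp_pos ω) hC
  -- each cell of Φ is contained in a unique cell of Φ'
  have huniq : ∀ C ∈ Φ, ∀ C' ∈ Φ', ∀ D' ∈ Φ', C ⊆ C' → C ⊆ D' → C' = D' := by
    intro C hC C' hC' D' hD' h1 h2
    by_contra hne
    obtain ⟨ω, hω⟩ := hΦne C hC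
    exact (Finset.disjoint_left.mp (hΦ'disj C' hC' D' hD' hne)) (h1 hω) (h2 hω)
  -- Φ decomposes as fibers over Φ'
  have hΦeq : Φ = Φ'.biUnion (fun C' => Φ.filter (· ⊆ C')) := by
    ext C
    simp only [Finset.mem_biUnion, Finset.mem_filter]
    constructor
    · intro hC
      obtain ⟨C', hC', hsub⟩ := href C hC
      exact ⟨C', hC', hC, hsub⟩
    · rintro ⟨C', _, hC, _⟩; exact hC
  have hfibdisj : (↑Φ' : Set (Finset Ω)).PairwiseDisjoint
      (fun C' => Φ.filter (· ⊆ C')) := by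
    intro C' hC' D' hD' hne
    refine Finset.disjoint_left.mpr ?_
    intro C hC1 hC2
    simp only [Finset.mem_filter] at hC1 hC2
    exact hne (huniq C hC1.1 C' hC' D' hD' hC1.2 hC2.2)
  -- each C' ∈ Φ' is the disjoint union of its fiber
  have hcell : ∀ C' ∈ Φ', C' = (Φ.filter (· ⊆ C')).biUnion id := by
    intro C' hC'
    ext ω
    simp only [Finset.mem_biUnion, Finset.mem_filter, id]
    constructor
    · intro hω
      obtain ⟨C, hC, hωC⟩ := hΦcov ω
      obtain ⟨D', hD', hsub⟩ := href C hC
      have : D' = C' := by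
        by_contra hne
        exact (Finset.disjoint_left.mp (hΦ'disj D' hD' C' hC' hne)) (hsub hωC) hω
      exact ⟨C, ⟨hC, this ▸ hsub⟩, hωC⟩
    · rintro ⟨C, ⟨_, hsub⟩, hωC⟩; exact hsub hωC
  have hcelldisj : ∀ C' ∈ Φ', (↑(Φ.filter (· ⊆ C')) : Set (Finset Ω)).PairwiseDisjoint id := by
    intro C' _ C hC D hD hne
    simp only [Finset.mem_coe, Finset.mem_filter] at hC hD
    exact hΦdisj C hC.1 D hD.1 hne
  -- rewrite LHS as a double sum
  rw [partBound, partBound, hΦeq, Finset.sum_biUnion hfibdisj]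
  apply Finset.sum_le_sum
  intro C' hC'
  set T := Φ.filter (· ⊆ C') with hT
  set W := ∑ ω ∈ C', p ω with hW
  have hWpos : 0 < W := hPpos C' (hΦ'ne C' hC')
  have hTmem : ∀ C ∈ T, C ∈ Φ := fun C hC => (Finset.mem_filter.mp hC).1
  have hPsum : ∑ C ∈ T, ∑ ω ∈ C, p ω = W := by
    rw [hW, hcell C' hC', Finset.sum_biUnion (hcelldisj C' hC')]
    simp only [id_eq]
    rfl
  have hVsum : ∑ C ∈ T, ∑ ω ∈ C, p ω • ξ ω = ∑ ω ∈ C', p ω • ξ ω := by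
    rw [hcell C' hC', Finset.sum_biUnion (hcelldisj C' hC')]
    simp only [id_eq]
    rfl
  -- Jensen with weights P(C)/W
  have hjen := hQt.le_map_sum (t := T)
    (w := fun C => (∑ ω ∈ C, p ω) / W)
    (p := fun C => (∑ ω ∈ C, p ω)⁻¹ • ∑ ω ∈ C, p ω • ξ ω)
    (fun C hC => div_nonneg (le_of_lt (hPpos C (hΦne C (hTmem C hC)))) hWpos.le)
    (by rw [← Finset.sum_div, hPsum, div_self hWpos.ne'])
    (fun C _ => Set.mem_univ _)
  have hpt : ∑ C ∈ T, ((∑ ω ∈ C, p ω) / W) • ((∑ ω ∈ C, p ω)⁻¹ • ∑ ω ∈ C, p ω • ξ ω)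
      = W⁻¹ • ∑ ω ∈ C', p ω • ξ ω := by
    rw [← hVsum, Finset.smul_sum]
    refine Finset.sum_congr rfl fun C hC => ?_
    rw [smul_smul]
    congr 1
    field_simp [(hPpos C (hΦne C (hTmem C hC))).ne']
  rw [hpt] at hjen
  calc ∑ C ∈ T, (∑ ω ∈ C, p ω) * Qt ((∑ ω ∈ C, p ω)⁻¹ • ∑ ω ∈ C, p ω • ξ ω)
      = W * ∑ C ∈ T, ((∑ ω ∈ C, p ω) / W) • Qt ((∑ ω ∈ C, p ω)⁻¹ • ∑ ω ∈ C, p ω • ξ ω) := by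
        rw [Finset.mul_sum]
        refine Finset.sum_congr rfl fun C _ => ?_
        simp only [smul_eq_mul]
        field_simp
    _ ≤ W * Qt (W⁻¹ • ∑ ω ∈ C', p ω • ξ ω) := by
        exact mul_le_mul_of_nonneg_left hjen hWpos.le
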